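/- With the twisted GKLO operators κ_{i,k}, κ'_{j,l} as in the context: for all pairs (i,k) ≠ (j,l) (with i, j ∈ I, 1 ≤ k ≤ m_i, 1 ≤ l ≤ m_j), the following identity of ℂ-linear endomorphisms of F holds: M(γ_{i,k} + γ_{j,l} + (1 − ½ a_{ij}) ℏ) ∘ κ_{i,k} ∘ κ'_{j,l} = M(γ_{i,k} + γ_{j,l} + (1 + ½ a_{ij}) ℏ) ∘ κ'_{j,l} ∘ κ_{i,k}. -/
import Mathlib


/- Twisted GKLO representation setup (type AI).
   Indices: `i ∈ I = {1,…,n−1}`, `1 ≤ k ≤ m i`, with conventions `m 0 = m n = 0`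
   (and `lam 0 = lam n = 0`), so that the indeterminates are exactly
   `ℏ`, `γ_{i,k}` (`i ∈ I`, `1 ≤ k ≤ m i`), `r_{i,t}` (`i ∈ I`, `1 ≤ t ≤ lam i`). -/

noncomputable section

/-- The indexing type of the indeterminates: `ℏ`, the `γ_{i,k}` and the `r_{i,t}`. -/
abbrev GVar (n : ℕ) (m lam : ℕ → ℕ) : Type :=
  Unit ⊕ ((Σ i : Fin (n + 1), Fin (m i)) ⊕ (Σ i : Fin (n + 1), Fin (lam i)))

/-- `F`, the fraction field of the polynomial ring over `ℂ` in the indeterminates. -/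
abbrev GF (n : ℕ) (m lam : ℕ → ℕ) : Type :=
  FractionRing (MvPolynomial (GVar n m lam) ℂ)

/-- The indeterminate `ℏ`. -/
def hb (n : ℕ) (m lam : ℕ → ℕ) : GF n m lam :=
  algebraMap (MvPolynomial (GVar n m lam) ℂ) (GF n m lam) (MvPolynomial.X (Sum.inl ()))

/-- The indeterminate `γ_{i,k}` (for `1 ≤ k ≤ m i`, `i ≤ n`; junk value `0` otherwise). -/
def gam (n : ℕ) (m lam : ℕ → ℕ) (i k : ℕ) : GF n m lam :=
  if h : i < n + 1 ∧ k - 1 < m i then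
    algebraMap (MvPolynomial (GVar n m lam) ℂ) (GF n m lam)
      (MvPolynomial.X (Sum.inr (Sum.inl ⟨⟨i, h.1⟩, ⟨k - 1, h.2⟩⟩)))
  else 0

/-- The indeterminate `r_{i,t}` (for `1 ≤ t ≤ lam i`, `i ≤ n`; junk value `0` otherwise). -/
def rv (n : ℕ) (m lam : ℕ → ℕ) (i t : ℕ) : GF n m lam :=
  if h : i < n + 1 ∧ t - 1 < lam i then
    algebraMap (MvPolynomial (GVar n m lam) ℂ) (GF n m lam)
      (MvPolynomial.X (Sum.inr (Sum.inr ⟨⟨i, h.1⟩, ⟨t - 1, h.2⟩⟩)))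
  else 0

/-- `ξ_{i,k} = γ_{i,k} + ℏ`. -/
def xi (n : ℕ) (m lam : ℕ → ℕ) (i k : ℕ) : GF n m lam :=
  gam n m lam i k + hb n m lam

/-- `R_i(x) = ∏_{t=1}^{λ_i} (x² − r_{i,t}²)`. -/
def RR (n : ℕ) (m lam : ℕ → ℕ) (i : ℕ) (x : GF n m lam) : GF n m lam :=
  ∏ t ∈ Finset.Icc 1 (lam i), (x ^ 2 - rv n m lam i t ^ 2)

/-- The coefficient `c_{i,k}` of the twisted GKLO operator `κ_{i,k}`. -/
def cc (n : ℕ) (m lam : ℕ → ℕ) (i k : ℕ) : GF n m lam :=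
  ((∏ l ∈ Finset.Icc 1 (m (i + 1)),
      (gam n m lam i k ^ 2 - (gam n m lam (i + 1) l + hb n m lam / 2) ^ 2)) *
    ∏ l ∈ Finset.Icc 1 (m (i - 1)),
      (gam n m lam i k + gam n m lam (i - 1) l + hb n m lam / 2)) /
  (2 * (gam n m lam i k - hb n m lam / 2) *
    ∏ l ∈ (Finset.Icc 1 (m i)).erase k, (gam n m lam i k ^ 2 - gam n m lam i l ^ 2))

/-- The coefficient `c'_{i,k}` of the twisted GKLO operator `κ'_{i,k}`. -/
def cc' (n : ℕ) (m lam : ℕ → ℕ) (i k : ℕ) : GF n m lam :=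
  (RR n m lam i (xi n m lam i k) *
    ∏ l ∈ Finset.Icc 1 (m (i - 1)),
      (xi n m lam i k - gam n m lam (i - 1) l - hb n m lam / 2)) /
  (2 * (gam n m lam i k + 3 * hb n m lam / 2) *
    ∏ l ∈ (Finset.Icc 1 (m i)).erase k, (xi n m lam i k ^ 2 - xi n m lam i l ^ 2))

/-- `M(f)`, the multiplication operator `x ↦ f·x`, as a `ℂ`-linear endomorphism of `F`. -/
def Mop (n : ℕ) (m lam : ℕ → ℕ) (f : GF n m lam) : Module.End ℂ (GF n m lam) :=
  LinearMap.mulLeft ℂ f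

/-- `κ_{i,k} = M(c_{i,k}) ∘ σ⁻_{i,k}`, where `σ` is the family of automorphisms `σ⁻`. -/
def kap (n : ℕ) (m lam : ℕ → ℕ) (σ : ℕ → ℕ → (GF n m lam ≃ₐ[ℂ] GF n m lam))
    (i k : ℕ) : Module.End ℂ (GF n m lam) :=
  Mop n m lam (cc n m lam i k) * (σ i k).toLinearMap

/-- `κ'_{i,k} = M(c'_{i,k}) ∘ σ⁺_{i,k}`, where `σ` is the family of automorphisms `σ⁺`. -/
def kap' (n : ℕ) (m lam : ℕ → ℕ) (σ : ℕ → ℕ → (GF n m lam ≃ₐ[ℂ] GF n m lam))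
    (i k : ℕ) : Module.End ℂ (GF n m lam) :=
  Mop n m lam (cc' n m lam i k) * (σ i k).toLinearMap

/-- The Cartan matrix of `sl_n`: `a_{ii} = 2`, `a_{ij} = −1` if `|i−j|=1`, else `0`. -/
def cartan (i j : ℕ) : ℤ :=
  if i = j then 2 else if i + 1 = j ∨ j + 1 = i then -1 else 0

lemma gam_eqv (n : ℕ) (m lam : ℕ → ℕ) (i k : ℕ) (h1 : i < n + 1) (h2 : k - 1 < m i) :
    gam n m lam i k = algebraMap (MvPolynomial (GVar n m lam) ℂ) (GF n m lam)
      (MvPolynomial.X (Sum.inr (Sum.inl ⟨⟨i, h1⟩, ⟨k - 1, h2⟩⟩))) := by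
  rw [gam, dif_pos ⟨h1, h2⟩]

lemma gam_eqv' (n : ℕ) (m lam : ℕ → ℕ) (a : Fin (n + 1)) (b : Fin (m a)) :
    algebraMap (MvPolynomial (GVar n m lam) ℂ) (GF n m lam)
      (MvPolynomial.X (Sum.inr (Sum.inl ⟨a, b⟩))) = gam n m lam a (b + 1) := by
  rw [gam, dif_pos ⟨a.isLt, by simp⟩]
  congr 2 <;> simp

lemma rv_eqv' (n : ℕ) (m lam : ℕ → ℕ) (a : Fin (n + 1)) (b : Fin (lam a)) :
    algebraMap (MvPolynomial (GVar n m lam) ℂ) (GF n m lam)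
      (MvPolynomial.X (Sum.inr (Sum.inr ⟨a, b⟩))) = rv n m lam a (b + 1) := by
  rw [rv, dif_pos ⟨a.isLt, by simp⟩]
  congr 2 <;> simp

lemma algebraMap_ne_zeroG (n : ℕ) (m lam : ℕ → ℕ) {p : MvPolynomial (GVar n m lam) ℂ}
    (f : GVar n m lam → ℂ) (h : MvPolynomial.eval f p ≠ 0) :
    algebraMap (MvPolynomial (GVar n m lam) ℂ) (GF n m lam) p ≠ 0 := by
  intro h0
  apply h
  have : p = 0 := (IsFractionRing.injective (MvPolynomial (GVar n m lam) ℂ) (GF n m lam))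
    (by rw [h0, map_zero])
  rw [this, map_zero]

/-- evaluation used to certify nonvanishing -/
def evv (n : ℕ) (m lam : ℕ → ℕ) (i k1 : ℕ) : GVar n m lam → ℂ :=
  fun v => match v with
  | .inl _ => 5
  | .inr (.inl s) => if s.1.1 = i ∧ s.2.1 = k1 then 2 else 3
  | .inr (.inr _) => 0

set_option maxHeartbeats 4000000
set_option synthInstance.maxHeartbeats 1000000

theorem gklo_kappa_kappaP_relation (n : ℕ) (hn : 2 ≤ n) (m lam : ℕ → ℕ)
    (hm0 : m 0 = 0) (hmn : m n = 0) (hlam0 : lam 0 = 0) (hlamn : lam n = 0)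
    (σm σp : ℕ → ℕ → (GF n m lam ≃ₐ[ℂ] GF n m lam))
    (hσmh : ∀ i k, σm i k (hb n m lam) = hb n m lam)
    (hσph : ∀ i k, σp i k (hb n m lam) = hb n m lam)
    (hσmr : ∀ i k i' t, σm i k (rv n m lam i' t) = rv n m lam i' t)
    (hσpr : ∀ i k i' t, σp i k (rv n m lam i' t) = rv n m lam i' t)
    (hσmg : ∀ i k i' k', 1 ≤ i' → i' ≤ n - 1 → 1 ≤ k' → k' ≤ m i' →
      σm i k (gam n m lam i' k') =
        if i' = i ∧ k' = k then gam n m lam i k - hb n m lam else gam n m lam i' k')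
    (hσpg : ∀ i k i' k', 1 ≤ i' → i' ≤ n - 1 → 1 ≤ k' → k' ≤ m i' →
      σp i k (gam n m lam i' k') =
        if i' = i ∧ k' = k then gam n m lam i k + hb n m lam else gam n m lam i' k')
    (i k j l : ℕ)
    (hi : 1 ≤ i) (hi' : i ≤ n - 1) (hk : 1 ≤ k) (hk' : k ≤ m i)
    (hj : 1 ≤ j) (hj' : j ≤ n - 1) (hl : 1 ≤ l) (hl' : l ≤ m j)
    (hne : (i, k) ≠ (j, l)) :
    Mop n m lam
        (gam n m lam i k + gam n m lam j l +
          (1 - (cartan i j : GF n m lam) / 2) * hb n m lam) *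
        kap n m lam σm i k * kap' n m lam σp j l =
      Mop n m lam
        (gam n m lam i k + gam n m lam j l +
          (1 + (cartan i j : GF n m lam) / 2) * hb n m lam) *
        kap' n m lam σp j l * kap n m lam σm i k := by
  -- basic index facts
  have hiN : i < n + 1 := by omega
  have hjN : j < n + 1 := by omega
  have hkm : k - 1 < m i := by omega
  have hlm : l - 1 < m j := by omega
  have hnkl : ¬(i = j ∧ k = l) := by
    rintro ⟨rfl, rfl⟩; exact hne rfl
  have hkIcc : k ∈ Finset.Icc 1 (m i) := Finset.mem_Icc.mpr ⟨hk, hk'⟩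
  have hlIcc : l ∈ Finset.Icc 1 (m j) := Finset.mem_Icc.mpr ⟨hl, hl'⟩
  -- atom evaluation lemmas
  have efixm : ∀ a x, 1 ≤ x → ¬(a = i ∧ x = k) →
      σm i k (gam n m lam a x) = gam n m lam a x := by
    intro a x hx1 hax
    by_cases hv : a < n + 1 ∧ x - 1 < m a
    · have ha0 : a ≠ 0 := by rintro rfl; rw [hm0] at hv; omega
      have han : a ≠ n := by rintro rfl; rw [hmn] at hv; omega
      rw [hσmg i k a x (by omega) (by omega) hx1 (by omega), if_neg hax]
    · rw [show gam n m lam a x = 0 from dif_neg hv, map_zero]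
  have efixp : ∀ a x, 1 ≤ x → ¬(a = j ∧ x = l) →
      σp j l (gam n m lam a x) = gam n m lam a x := by
    intro a x hx1 hax
    by_cases hv : a < n + 1 ∧ x - 1 < m a
    · have ha0 : a ≠ 0 := by rintro rfl; rw [hm0] at hv; omega
      have han : a ≠ n := by rintro rfl; rw [hmn] at hv; omega
      rw [hσpg j l a x (by omega) (by omega) hx1 (by omega), if_neg hax]
    · rw [show gam n m lam a x = 0 from dif_neg hv, map_zero]
  have hmgik : σm i k (gam n m lam i k) = gam n m lam i k - hb n m lam := by
    rw [hσmg i k i k hi hi' hk hk', if_pos ⟨rfl, rfl⟩]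
  have hpgjl : σp j l (gam n m lam j l) = gam n m lam j l + hb n m lam := by
    rw [hσpg j l j l hj hj' hl hl', if_pos ⟨rfl, rfl⟩]
  -- product helpers
  have hPfix : ∀ (σ : GF n m lam ≃ₐ[ℂ] GF n m lam) (s : Finset ℕ) (f : ℕ → GF n m lam),
      (∀ x ∈ s, σ (f x) = f x) → σ (∏ x ∈ s, f x) = ∏ x ∈ s, f x := by
    intro σ s f hf
    rw [map_prod]
    exact Finset.prod_congr rfl hf
  have hPsp : ∀ (σ : GF n m lam ≃ₐ[ℂ] GF n m lam) (s : Finset ℕ) (f : ℕ → GF n m lam)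
      (a : ℕ) (g : GF n m lam), a ∈ s → σ (f a) = g → (∀ x ∈ s.erase a, σ (f x) = f x) →
      σ (∏ x ∈ s, f x) = g * ∏ x ∈ s.erase a, f x := by
    intro σ s f a g ha hg hf
    rw [← Finset.mul_prod_erase _ _ ha, map_mul, hg, hPfix σ _ _ hf]
  -- commutation of the two automorphisms
  have hcomm : ∀ x : GF n m lam, σm i k (σp j l x) = σp j l (σm i k x) := by
    have key : ((σm i k).toRingEquiv.toRingHom.comp (σp j l).toRingEquiv.toRingHom) =
        ((σp j l).toRingEquiv.toRingHom.comp (σm i k).toRingEquiv.toRingHom) := by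
      apply IsLocalization.ringHom_ext (nonZeroDivisors (MvPolynomial (GVar n m lam) ℂ))
      apply MvPolynomial.ringHom_ext
      · intro r
        simp only [RingHom.comp_apply, RingEquiv.toRingHom_eq_coe, RingHom.coe_coe,
          AlgEquiv.coe_ringEquiv]
        have : (algebraMap (MvPolynomial (GVar n m lam) ℂ) (GF n m lam)) (MvPolynomial.C r)
            = algebraMap ℂ (GF n m lam) r := by
          rw [← MvPolynomial.algebraMap_eq, ← IsScalarTower.algebraMap_apply]
        simp only [this]
        show σm i k (σp j l _) = σp j l (σm i k _)
        simp [AlgEquiv.commutes]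
      · intro v
        simp only [RingHom.comp_apply, RingEquiv.toRingHom_eq_coe, RingHom.coe_coe,
          AlgEquiv.coe_ringEquiv]
        show σm i k (σp j l _) = σp j l (σm i k _)
        rcases v with _ | (⟨a, b⟩ | ⟨a, b⟩)
        · show σm i k (σp j l (hb n m lam)) = σp j l (σm i k (hb n m lam))
          simp only [hσmh, hσph]
        · rw [gam_eqv' n m lam a b]
          have hbm : (1:ℕ) ≤ (b:ℕ) + 1 := by omega
          generalize hq : (b:ℕ) + 1 = bv at hbm ⊢
          generalize hr : (a:ℕ) = av at hbm ⊢
          by_cases hc1 : av = i ∧ bv = k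
          · obtain ⟨rfl, rfl⟩ := hc1
            have hc2 : ¬(av = j ∧ bv = l) := fun hh => hnkl ⟨hh.1, hh.2⟩
            rw [efixp av bv hbm hc2, hmgik, map_sub, hσph, efixp av bv hk hnkl]
          · rw [efixm av bv hbm hc1]
            by_cases hc2 : av = j ∧ bv = l
            · obtain ⟨rfl, rfl⟩ := hc2
              rw [hpgjl, map_add, hσmh,
                efixm av bv hbm (fun hh => hnkl ⟨hh.1.symm, hh.2.symm⟩)]
            · rw [efixp av bv hbm hc2, efixm av bv hbm hc1]
        · rw [rv_eqv' n m lam a b]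
          simp only [hσmr, hσpr]
    intro x
    exact DFunLike.congr_fun key x
  -- the scalar identity
  have HS : (gam n m lam i k + gam n m lam j l +
        (1 - (cartan i j : GF n m lam) / 2) * hb n m lam) * cc n m lam i k *
        σm i k (cc' n m lam j l) =
      (gam n m lam i k + gam n m lam j l +
        (1 + (cartan i j : GF n m lam) / 2) * hb n m lam) * cc' n m lam j l *
        σp j l (cc n m lam i k) := by
    have hfrac : ∀ a x y b c : GF n m lam, a * (x / b) * (y / c) = a * (x * y) / (b * c) := by
      intro a x y b c
      rw [mul_assoc, div_mul_div_comm, ← mul_div_assoc]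
    have hfrac2 : ∀ a x b y : GF n m lam, a * (x / b) * y = a * (x * y) / b := by
      intro a x b y
      rw [← mul_div_assoc, div_mul_eq_mul_div, mul_assoc]
    have hfrac3 : ∀ a y x b : GF n m lam, a * y * (x / b) = a * (y * x) / b := by
      intro a y x b
      rw [← mul_div_assoc, mul_assoc]
    have two_ne' : (2 : GF n m lam) ≠ 0 := by norm_num
    rcases (show i = j ∨ j = i + 1 ∨ i = j + 1 ∨ (i + 1 < j ∨ j + 1 < i) from by omega)
      with hc | hc | hc | hc

    · -- i = j
      subst hc
      have hkl : k ≠ l := fun h => hnkl ⟨rfl, h⟩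
      have hkel : k ∈ (Finset.Icc 1 (m i)).erase l :=
        Finset.mem_erase.mpr ⟨hkl, hkIcc⟩
      have hlek : l ∈ (Finset.Icc 1 (m i)).erase k :=
        Finset.mem_erase.mpr ⟨fun h => hkl h.symm, hlIcc⟩
      have hQR : σm i k (∏ t ∈ Finset.Icc 1 (lam i),
          ((gam n m lam i l + hb n m lam) ^ 2 - rv n m lam i t ^ 2)) =
          ∏ t ∈ Finset.Icc 1 (lam i), ((gam n m lam i l + hb n m lam) ^ 2 - rv n m lam i t ^ 2) := by
        refine hPfix _ _ _ fun t ht => ?_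
        simp only [map_sub, map_pow, map_add, hσmh i k, hσmr i k]
        rw [efixm i l hl (by omega)]
      have hQ2 : σm i k (∏ x ∈ Finset.Icc 1 (m (i - 1)),
          (gam n m lam i l + hb n m lam - gam n m lam (i - 1) x - hb n m lam / 2)) =
          ∏ x ∈ Finset.Icc 1 (m (i - 1)),
            (gam n m lam i l + hb n m lam - gam n m lam (i - 1) x - hb n m lam / 2) := by
        refine hPfix _ _ _ fun x hx => ?_
        have hx' := Finset.mem_Icc.mp hx
        simp only [map_sub, map_add, map_div₀, map_ofNat, hσmh i k]
        rw [efixm i l hl (by omega), efixm (i - 1) x (by omega) (by omega)]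
      have hF : σm i k (∏ x ∈ (Finset.Icc 1 (m i)).erase l,
          ((gam n m lam i l + hb n m lam) ^ 2 - (gam n m lam i x + hb n m lam) ^ 2)) =
          ((gam n m lam i l + hb n m lam) ^ 2 - gam n m lam i k ^ 2) *
          ∏ x ∈ ((Finset.Icc 1 (m i)).erase l).erase k,
            ((gam n m lam i l + hb n m lam) ^ 2 - (gam n m lam i x + hb n m lam) ^ 2) := by
        refine hPsp _ _ _ k _ hkel ?_ fun x hx => ?_
        · simp only [map_sub, map_pow, map_add, hσmh i k]
          rw [efixm i l hl (by omega), hmgik]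
          ring
        · have hxk := (Finset.mem_erase.mp hx).1
          have hx' := Finset.mem_Icc.mp (Finset.mem_of_mem_erase (Finset.mem_of_mem_erase hx))
          simp only [map_sub, map_pow, map_add, hσmh i k]
          rw [efixm i l hl (by omega), efixm i x (by omega) (by omega)]
      have hφc' : σm i k (cc' n m lam i l) =
          (∏ t ∈ Finset.Icc 1 (lam i), ((gam n m lam i l + hb n m lam) ^ 2 - rv n m lam i t ^ 2)) *
          (∏ x ∈ Finset.Icc 1 (m (i - 1)),
              (gam n m lam i l + hb n m lam - gam n m lam (i - 1) x - hb n m lam / 2)) /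
          (2 * (gam n m lam i l + 3 * hb n m lam / 2) *
            (((gam n m lam i l + hb n m lam) ^ 2 - gam n m lam i k ^ 2) *
              ∏ x ∈ ((Finset.Icc 1 (m i)).erase l).erase k,
                ((gam n m lam i l + hb n m lam) ^ 2 - (gam n m lam i x + hb n m lam) ^ 2))) := by
        simp only [cc', RR, xi, map_div₀, map_mul, map_add, map_ofNat, hσmh i k]
        rw [hQR, hQ2, hF, efixm i l hl (by omega)]
      have hψP1 : σp i l (∏ x ∈ Finset.Icc 1 (m (i + 1)),
          (gam n m lam i k ^ 2 - (gam n m lam (i + 1) x + hb n m lam / 2) ^ 2)) =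
          ∏ x ∈ Finset.Icc 1 (m (i + 1)),
            (gam n m lam i k ^ 2 - (gam n m lam (i + 1) x + hb n m lam / 2) ^ 2) := by
        refine hPfix _ _ _ fun x hx => ?_
        have hx' := Finset.mem_Icc.mp hx
        simp only [map_sub, map_pow, map_add, map_div₀, map_ofNat, hσph i l]
        rw [efixp i k hk (by omega), efixp (i + 1) x (by omega) (by omega)]
      have hψP2 : σp i l (∏ x ∈ Finset.Icc 1 (m (i - 1)),
          (gam n m lam i k + gam n m lam (i - 1) x + hb n m lam / 2)) =
          ∏ x ∈ Finset.Icc 1 (m (i - 1)), (gam n m lam i k + gam n m lam (i - 1) x + hb n m lam / 2) := by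
        refine hPfix _ _ _ fun x hx => ?_
        have hx' := Finset.mem_Icc.mp hx
        simp only [map_add, map_div₀, map_ofNat, hσph i l]
        rw [efixp i k hk (by omega), efixp (i - 1) x (by omega) (by omega)]
      have hψE : σp i l (∏ x ∈ (Finset.Icc 1 (m i)).erase k,
          (gam n m lam i k ^ 2 - gam n m lam i x ^ 2)) =
          (gam n m lam i k ^ 2 - (gam n m lam i l + hb n m lam) ^ 2) *
          ∏ x ∈ ((Finset.Icc 1 (m i)).erase k).erase l,
            (gam n m lam i k ^ 2 - gam n m lam i x ^ 2) := by
        refine hPsp _ _ _ l _ hlek ?_ fun x hx => ?_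
        · simp only [map_sub, map_pow, hσph i l]
          rw [efixp i k hk (by omega), hpgjl]
        · have hxl := (Finset.mem_erase.mp hx).1
          have hx' := Finset.mem_Icc.mp (Finset.mem_of_mem_erase (Finset.mem_of_mem_erase hx))
          simp only [map_sub, map_pow, hσph i l]
          rw [efixp i k hk (by omega), efixp i x (by omega) (by omega)]
      have hψcc : σp i l (cc n m lam i k) =
          (∏ x ∈ Finset.Icc 1 (m (i + 1)),
              (gam n m lam i k ^ 2 - (gam n m lam (i + 1) x + hb n m lam / 2) ^ 2)) *
          (∏ x ∈ Finset.Icc 1 (m (i - 1)), (gam n m lam i k + gam n m lam (i - 1) x + hb n m lam / 2)) /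
          (2 * (gam n m lam i k - hb n m lam / 2) *
            ((gam n m lam i k ^ 2 - (gam n m lam i l + hb n m lam) ^ 2) *
              ∏ x ∈ ((Finset.Icc 1 (m i)).erase k).erase l,
                (gam n m lam i k ^ 2 - gam n m lam i x ^ 2))) := by
        simp only [cc, map_div₀, map_mul, map_sub, map_ofNat, hσph i l]
        rw [hψP1, hψP2, hψE, efixp i k hk (by omega)]
      have hcsp : cc n m lam i k =
          (∏ x ∈ Finset.Icc 1 (m (i + 1)),
              (gam n m lam i k ^ 2 - (gam n m lam (i + 1) x + hb n m lam / 2) ^ 2)) *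
          (∏ x ∈ Finset.Icc 1 (m (i - 1)), (gam n m lam i k + gam n m lam (i - 1) x + hb n m lam / 2)) /
          (2 * (gam n m lam i k - hb n m lam / 2) *
            ((gam n m lam i k ^ 2 - gam n m lam i l ^ 2) *
              ∏ x ∈ ((Finset.Icc 1 (m i)).erase k).erase l,
                (gam n m lam i k ^ 2 - gam n m lam i x ^ 2))) := by
        simp only [cc]
        rw [← Finset.mul_prod_erase _ _ hlek]
      have hc'sp : cc' n m lam i l =
          (∏ t ∈ Finset.Icc 1 (lam i), ((gam n m lam i l + hb n m lam) ^ 2 - rv n m lam i t ^ 2)) *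
          (∏ x ∈ Finset.Icc 1 (m (i - 1)),
              (gam n m lam i l + hb n m lam - gam n m lam (i - 1) x - hb n m lam / 2)) /
          (2 * (gam n m lam i l + 3 * hb n m lam / 2) *
            (((gam n m lam i l + hb n m lam) ^ 2 - (gam n m lam i k + hb n m lam) ^ 2) *
              ∏ x ∈ ((Finset.Icc 1 (m i)).erase l).erase k,
                ((gam n m lam i l + hb n m lam) ^ 2 - (gam n m lam i x + hb n m lam) ^ 2))) := by
        simp only [cc', RR, xi]
        rw [← Finset.mul_prod_erase _ _ hkel]
      have hbdef : hb n m lam = algebraMap (MvPolynomial (GVar n m lam) ℂ) (GF n m lam)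
          (MvPolynomial.X (Sum.inl ())) := rfl
      have hgikd := gam_eqv n m lam i k hiN hkm
      have hgild := gam_eqv n m lam i l hiN hlm
      have hlk1 : ¬(l - 1 = k - 1) := by omega
      have n1 : gam n m lam i k ^ 2 - gam n m lam i l ^ 2 ≠ 0 := by
        rw [hgikd, hgild, ← map_pow, ← map_pow, ← map_sub]
        apply algebraMap_ne_zeroG n m lam (evv n m lam i (k - 1))
        simp [evv, hlk1]
        norm_num
      have n2 : (gam n m lam i l + hb n m lam) ^ 2 - gam n m lam i k ^ 2 ≠ 0 := by
        rw [hgikd, hgild, hbdef, ← map_add, ← map_pow, ← map_pow, ← map_sub]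
        apply algebraMap_ne_zeroG n m lam (evv n m lam i (k - 1))
        simp [evv, hlk1]
        norm_num
      have n3 : (gam n m lam i l + hb n m lam) ^ 2 - (gam n m lam i k + hb n m lam) ^ 2 ≠ 0 := by
        rw [hgikd, hgild, hbdef, ← map_add, ← map_add, ← map_pow, ← map_pow, ← map_sub]
        apply algebraMap_ne_zeroG n m lam (evv n m lam i (k - 1))
        simp [evv, hlk1]
        norm_num
      have n4 : gam n m lam i k ^ 2 - (gam n m lam i l + hb n m lam) ^ 2 ≠ 0 := fun h0 =>
        n2 (by linear_combination -h0)
      have hgv : ∀ x ∈ Finset.Icc 1 (m i), ∀ (hxm : x - 1 < m i), gam n m lam i x =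
          algebraMap (MvPolynomial (GVar n m lam) ℂ) (GF n m lam)
            (MvPolynomial.X (Sum.inr (Sum.inl ⟨⟨i, hiN⟩, ⟨x - 1, hxm⟩⟩))) := by
        intro x hx hxm
        exact gam_eqv n m lam i x hiN hxm
      have f1 : gam n m lam i k - hb n m lam / 2 ≠ 0 := by
        have z1 : (2 : GF n m lam) * gam n m lam i k - hb n m lam ≠ 0 := by
          have e : (2 : GF n m lam) * gam n m lam i k - hb n m lam =
              algebraMap (MvPolynomial (GVar n m lam) ℂ) (GF n m lam)
                (2 * MvPolynomial.X (Sum.inr (Sum.inl ⟨⟨i, hiN⟩, ⟨k - 1, hkm⟩⟩)) -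
                  MvPolynomial.X (Sum.inl ())) := by
            rw [map_sub, map_mul, map_ofNat, ← hgikd]
            rfl
          rw [e]
          apply algebraMap_ne_zeroG n m lam (evv n m lam i (k - 1))
          simp [evv]
          norm_num
        exact fun h0 => z1 (by linear_combination 2 * h0)
      have f2 : gam n m lam i l + 3 * hb n m lam / 2 ≠ 0 := by
        have z2 : (2 : GF n m lam) * gam n m lam i l + 3 * hb n m lam ≠ 0 := by
          have e : (2 : GF n m lam) * gam n m lam i l + 3 * hb n m lam =
              algebraMap (MvPolynomial (GVar n m lam) ℂ) (GF n m lam)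
                (2 * MvPolynomial.X (Sum.inr (Sum.inl ⟨⟨i, hiN⟩, ⟨l - 1, hlm⟩⟩)) +
                  3 * MvPolynomial.X (Sum.inl ())) := by
            rw [map_add, map_mul, map_mul, map_ofNat, map_ofNat, ← hgild]
            rfl
          rw [e]
          apply algebraMap_ne_zeroG n m lam (evv n m lam i (k - 1))
          simp [evv, hlk1]
          norm_num
        exact fun h0 => z2 (by linear_combination 2 * h0)
      have hdE : (∏ x ∈ ((Finset.Icc 1 (m i)).erase k).erase l,
          (gam n m lam i k ^ 2 - gam n m lam i x ^ 2)) ≠ 0 := by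
        rw [Finset.prod_ne_zero_iff]
        intro x hx
        have hxl := (Finset.mem_erase.mp hx).1
        have hxk := (Finset.mem_erase.mp (Finset.mem_of_mem_erase hx)).1
        have hxI := Finset.mem_of_mem_erase (Finset.mem_of_mem_erase hx)
        have hx' := Finset.mem_Icc.mp hxI
        rw [hgikd, hgv x hxI (by omega), ← map_pow, ← map_pow, ← map_sub]
        apply algebraMap_ne_zeroG n m lam (evv n m lam i (k - 1))
        have h1 : ¬(x - 1 = k - 1) := by omega
        simp [evv, h1]
        norm_num
      have hdF : (∏ x ∈ ((Finset.Icc 1 (m i)).erase l).erase k,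
          ((gam n m lam i l + hb n m lam) ^ 2 - (gam n m lam i x + hb n m lam) ^ 2)) ≠ 0 := by
        rw [Finset.prod_ne_zero_iff]
        intro x hx
        have hxk := (Finset.mem_erase.mp hx).1
        have hxl := (Finset.mem_erase.mp (Finset.mem_of_mem_erase hx)).1
        have hxI := Finset.mem_of_mem_erase (Finset.mem_of_mem_erase hx)
        have hx' := Finset.mem_Icc.mp hxI
        rw [hgild, hgv x hxI (by omega), hbdef, ← map_add, ← map_add, ← map_pow, ← map_pow,
          ← map_sub]
        apply algebraMap_ne_zeroG n m lam (evv n m lam i (l - 1))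
        have h1 : ¬(x - 1 = l - 1) := by omega
        simp [evv, h1]
        norm_num
      have hDL := mul_ne_zero (mul_ne_zero (mul_ne_zero two_ne' f1) (mul_ne_zero n1 hdE))
        (mul_ne_zero (mul_ne_zero two_ne' f2) (mul_ne_zero n2 hdF))
      have hDR := mul_ne_zero (mul_ne_zero (mul_ne_zero two_ne' f2) (mul_ne_zero n3 hdF))
        (mul_ne_zero (mul_ne_zero two_ne' f1) (mul_ne_zero n4 hdE))
      rw [hφc', hψcc, hcsp, hc'sp,
        show cartan i i = 2 from by simp [cartan], hfrac, hfrac,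
        div_eq_div_iff hDL hDR]
      push_cast
      ring

    · -- j = i + 1
      subst hc
      have hψP1 : σp (i + 1) l (∏ x ∈ Finset.Icc 1 (m (i + 1)),
          (gam n m lam i k ^ 2 - (gam n m lam (i + 1) x + hb n m lam / 2) ^ 2)) =
          (gam n m lam i k ^ 2 - (gam n m lam (i + 1) l + hb n m lam + hb n m lam / 2) ^ 2) *
          ∏ x ∈ (Finset.Icc 1 (m (i + 1))).erase l,
            (gam n m lam i k ^ 2 - (gam n m lam (i + 1) x + hb n m lam / 2) ^ 2) := by
        refine hPsp _ _ _ l _ hlIcc ?_ fun x hx => ?_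
        · simp only [map_sub, map_pow, map_add, map_div₀, map_ofNat, hσph (i + 1) l]
          rw [efixp i k hk (by omega), hpgjl]
        · have hxl := (Finset.mem_erase.mp hx).1
          have hx' := Finset.mem_Icc.mp (Finset.mem_of_mem_erase hx)
          simp only [map_sub, map_pow, map_add, map_div₀, map_ofNat, hσph (i + 1) l]
          rw [efixp i k hk (by omega), efixp (i + 1) x (by omega) (by omega)]
      have hψP2 : σp (i + 1) l (∏ x ∈ Finset.Icc 1 (m (i - 1)),
          (gam n m lam i k + gam n m lam (i - 1) x + hb n m lam / 2)) =
          ∏ x ∈ Finset.Icc 1 (m (i - 1)), (gam n m lam i k + gam n m lam (i - 1) x + hb n m lam / 2) := by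
        refine hPfix _ _ _ fun x hx => ?_
        have hx' := Finset.mem_Icc.mp hx
        simp only [map_add, map_div₀, map_ofNat, hσph (i + 1) l]
        rw [efixp i k hk (by omega), efixp (i - 1) x (by omega) (by omega)]
      have hψE : σp (i + 1) l (∏ x ∈ (Finset.Icc 1 (m i)).erase k,
          (gam n m lam i k ^ 2 - gam n m lam i x ^ 2)) =
          ∏ x ∈ (Finset.Icc 1 (m i)).erase k, (gam n m lam i k ^ 2 - gam n m lam i x ^ 2) := by
        refine hPfix _ _ _ fun x hx => ?_
        have hx' := Finset.mem_Icc.mp (Finset.mem_of_mem_erase hx)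
        simp only [map_sub, map_pow, hσph (i + 1) l]
        rw [efixp i k hk (by omega), efixp i x (by omega) (by omega)]
      have hψcc : σp (i + 1) l (cc n m lam i k) =
          ((gam n m lam i k ^ 2 - (gam n m lam (i + 1) l + hb n m lam + hb n m lam / 2) ^ 2) *
            ∏ x ∈ (Finset.Icc 1 (m (i + 1))).erase l,
              (gam n m lam i k ^ 2 - (gam n m lam (i + 1) x + hb n m lam / 2) ^ 2)) *
          (∏ x ∈ Finset.Icc 1 (m (i - 1)), (gam n m lam i k + gam n m lam (i - 1) x + hb n m lam / 2)) /
          (2 * (gam n m lam i k - hb n m lam / 2) *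
            ∏ x ∈ (Finset.Icc 1 (m i)).erase k, (gam n m lam i k ^ 2 - gam n m lam i x ^ 2)) := by
        simp only [cc, map_div₀, map_mul, map_sub, map_ofNat, hσph (i + 1) l]
        rw [hψP1, hψP2, hψE, efixp i k hk (by omega)]
      have hQR : σm i k (∏ t ∈ Finset.Icc 1 (lam (i + 1)),
          ((gam n m lam (i + 1) l + hb n m lam) ^ 2 - rv n m lam (i + 1) t ^ 2)) =
          ∏ t ∈ Finset.Icc 1 (lam (i + 1)),
            ((gam n m lam (i + 1) l + hb n m lam) ^ 2 - rv n m lam (i + 1) t ^ 2) := by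
        refine hPfix _ _ _ fun t ht => ?_
        simp only [map_sub, map_pow, map_add, hσmh i k, hσmr i k]
        rw [efixm (i + 1) l hl (by omega)]
      have hQ2 : σm i k (∏ x ∈ Finset.Icc 1 (m i),
          (gam n m lam (i + 1) l + hb n m lam - gam n m lam i x - hb n m lam / 2)) =
          (gam n m lam (i + 1) l + hb n m lam - (gam n m lam i k - hb n m lam) - hb n m lam / 2) *
          ∏ x ∈ (Finset.Icc 1 (m i)).erase k,
            (gam n m lam (i + 1) l + hb n m lam - gam n m lam i x - hb n m lam / 2) := by
        refine hPsp _ _ _ k _ hkIcc ?_ fun x hx => ?_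
        · simp only [map_sub, map_add, map_div₀, map_ofNat, hσmh i k]
          rw [efixm (i + 1) l hl (by omega), hmgik]
        · have hxk := (Finset.mem_erase.mp hx).1
          have hx' := Finset.mem_Icc.mp (Finset.mem_of_mem_erase hx)
          simp only [map_sub, map_add, map_div₀, map_ofNat, hσmh i k]
          rw [efixm (i + 1) l hl (by omega), efixm i x (by omega) (by omega)]
      have hF : σm i k (∏ x ∈ (Finset.Icc 1 (m (i + 1))).erase l,
          ((gam n m lam (i + 1) l + hb n m lam) ^ 2 - (gam n m lam (i + 1) x + hb n m lam) ^ 2)) =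
          ∏ x ∈ (Finset.Icc 1 (m (i + 1))).erase l,
            ((gam n m lam (i + 1) l + hb n m lam) ^ 2 - (gam n m lam (i + 1) x + hb n m lam) ^ 2) := by
        refine hPfix _ _ _ fun x hx => ?_
        have hx' := Finset.mem_Icc.mp (Finset.mem_of_mem_erase hx)
        simp only [map_sub, map_pow, map_add, hσmh i k]
        rw [efixm (i + 1) l hl (by omega), efixm (i + 1) x (by omega) (by omega)]
      have hφc' : σm i k (cc' n m lam (i + 1) l) =
          (∏ t ∈ Finset.Icc 1 (lam (i + 1)),
              ((gam n m lam (i + 1) l + hb n m lam) ^ 2 - rv n m lam (i + 1) t ^ 2)) *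
          ((gam n m lam (i + 1) l + hb n m lam - (gam n m lam i k - hb n m lam) - hb n m lam / 2) *
            ∏ x ∈ (Finset.Icc 1 (m i)).erase k,
              (gam n m lam (i + 1) l + hb n m lam - gam n m lam i x - hb n m lam / 2)) /
          (2 * (gam n m lam (i + 1) l + 3 * hb n m lam / 2) *
            ∏ x ∈ (Finset.Icc 1 (m (i + 1))).erase l,
              ((gam n m lam (i + 1) l + hb n m lam) ^ 2 - (gam n m lam (i + 1) x + hb n m lam) ^ 2)) := by
        simp only [cc', RR, xi, Nat.add_sub_cancel, map_div₀, map_mul, map_add, map_ofNat,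
          hσmh i k]
        rw [hQR, hQ2, hF, efixm (i + 1) l hl (by omega)]
      have hcsp : cc n m lam i k =
          ((gam n m lam i k ^ 2 - (gam n m lam (i + 1) l + hb n m lam / 2) ^ 2) *
            ∏ x ∈ (Finset.Icc 1 (m (i + 1))).erase l,
              (gam n m lam i k ^ 2 - (gam n m lam (i + 1) x + hb n m lam / 2) ^ 2)) *
          (∏ x ∈ Finset.Icc 1 (m (i - 1)), (gam n m lam i k + gam n m lam (i - 1) x + hb n m lam / 2)) /
          (2 * (gam n m lam i k - hb n m lam / 2) *
            ∏ x ∈ (Finset.Icc 1 (m i)).erase k, (gam n m lam i k ^ 2 - gam n m lam i x ^ 2)) := by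
        simp only [cc]
        rw [← Finset.mul_prod_erase _ _ hlIcc]
      have hc'sp : cc' n m lam (i + 1) l =
          (∏ t ∈ Finset.Icc 1 (lam (i + 1)),
              ((gam n m lam (i + 1) l + hb n m lam) ^ 2 - rv n m lam (i + 1) t ^ 2)) *
          ((gam n m lam (i + 1) l + hb n m lam - gam n m lam i k - hb n m lam / 2) *
            ∏ x ∈ (Finset.Icc 1 (m i)).erase k,
              (gam n m lam (i + 1) l + hb n m lam - gam n m lam i x - hb n m lam / 2)) /
          (2 * (gam n m lam (i + 1) l + 3 * hb n m lam / 2) *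
            ∏ x ∈ (Finset.Icc 1 (m (i + 1))).erase l,
              ((gam n m lam (i + 1) l + hb n m lam) ^ 2 - (gam n m lam (i + 1) x + hb n m lam) ^ 2)) := by
        simp only [cc', RR, xi, Nat.add_sub_cancel]
        rw [← Finset.mul_prod_erase _ _ hkIcc]
      rw [hφc', hψcc, hcsp, hc'sp,
        show cartan i (i + 1) = -1 from by simp [cartan], hfrac, hfrac]
      congr 1
      · push_cast
        ring
      · ring

    · -- i = j + 1
      subst hc
      have hQR : σm (j + 1) k (∏ t ∈ Finset.Icc 1 (lam j),
          ((gam n m lam j l + hb n m lam) ^ 2 - rv n m lam j t ^ 2)) =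
          ∏ t ∈ Finset.Icc 1 (lam j), ((gam n m lam j l + hb n m lam) ^ 2 - rv n m lam j t ^ 2) := by
        refine hPfix _ _ _ fun t ht => ?_
        simp only [map_sub, map_pow, map_add, hσmh (j + 1) k, hσmr (j + 1) k]
        rw [efixm j l hl (by omega)]
      have hQ2 : σm (j + 1) k (∏ x ∈ Finset.Icc 1 (m (j - 1)),
          (gam n m lam j l + hb n m lam - gam n m lam (j - 1) x - hb n m lam / 2)) =
          ∏ x ∈ Finset.Icc 1 (m (j - 1)),
            (gam n m lam j l + hb n m lam - gam n m lam (j - 1) x - hb n m lam / 2) := by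
        refine hPfix _ _ _ fun x hx => ?_
        have hx' := Finset.mem_Icc.mp hx
        simp only [map_sub, map_add, map_div₀, map_ofNat, hσmh (j + 1) k]
        rw [efixm j l hl (by omega), efixm (j - 1) x (by omega) (by omega)]
      have hF : σm (j + 1) k (∏ x ∈ (Finset.Icc 1 (m j)).erase l,
          ((gam n m lam j l + hb n m lam) ^ 2 - (gam n m lam j x + hb n m lam) ^ 2)) =
          ∏ x ∈ (Finset.Icc 1 (m j)).erase l,
            ((gam n m lam j l + hb n m lam) ^ 2 - (gam n m lam j x + hb n m lam) ^ 2) := by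
        refine hPfix _ _ _ fun x hx => ?_
        have hx' := Finset.mem_Icc.mp (Finset.mem_of_mem_erase hx)
        simp only [map_sub, map_pow, map_add, hσmh (j + 1) k]
        rw [efixm j l hl (by omega), efixm j x (by omega) (by omega)]
      have hφc' : σm (j + 1) k (cc' n m lam j l) = cc' n m lam j l := by
        simp only [cc', RR, xi, map_div₀, map_mul, map_add, map_ofNat, hσmh (j + 1) k]
        rw [hQR, hQ2, hF, efixm j l hl (by omega)]
      have hψP1 : σp j l (∏ x ∈ Finset.Icc 1 (m (j + 1 + 1)),
          (gam n m lam (j + 1) k ^ 2 - (gam n m lam (j + 1 + 1) x + hb n m lam / 2) ^ 2)) =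
          ∏ x ∈ Finset.Icc 1 (m (j + 1 + 1)),
            (gam n m lam (j + 1) k ^ 2 - (gam n m lam (j + 1 + 1) x + hb n m lam / 2) ^ 2) := by
        refine hPfix _ _ _ fun x hx => ?_
        have hx' := Finset.mem_Icc.mp hx
        simp only [map_sub, map_pow, map_add, map_div₀, map_ofNat, hσph j l]
        rw [efixp (j + 1) k hk (by omega), efixp (j + 1 + 1) x (by omega) (by omega)]
      have hψP2 : σp j l (∏ x ∈ Finset.Icc 1 (m j),
          (gam n m lam (j + 1) k + gam n m lam j x + hb n m lam / 2)) =
          (gam n m lam (j + 1) k + (gam n m lam j l + hb n m lam) + hb n m lam / 2) *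
          ∏ x ∈ (Finset.Icc 1 (m j)).erase l,
            (gam n m lam (j + 1) k + gam n m lam j x + hb n m lam / 2) := by
        refine hPsp _ _ _ l _ hlIcc ?_ fun x hx => ?_
        · simp only [map_add, map_div₀, map_ofNat, hσph j l]
          rw [efixp (j + 1) k hk (by omega), hpgjl]
        · have hxl := (Finset.mem_erase.mp hx).1
          have hx' := Finset.mem_Icc.mp (Finset.mem_of_mem_erase hx)
          simp only [map_add, map_div₀, map_ofNat, hσph j l]
          rw [efixp (j + 1) k hk (by omega), efixp j x (by omega) (by omega)]
      have hψE : σp j l (∏ x ∈ (Finset.Icc 1 (m (j + 1))).erase k,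
          (gam n m lam (j + 1) k ^ 2 - gam n m lam (j + 1) x ^ 2)) =
          ∏ x ∈ (Finset.Icc 1 (m (j + 1))).erase k,
            (gam n m lam (j + 1) k ^ 2 - gam n m lam (j + 1) x ^ 2) := by
        refine hPfix _ _ _ fun x hx => ?_
        have hx' := Finset.mem_Icc.mp (Finset.mem_of_mem_erase hx)
        simp only [map_sub, map_pow, hσph j l]
        rw [efixp (j + 1) k hk (by omega), efixp (j + 1) x (by omega) (by omega)]
      have hψcc : σp j l (cc n m lam (j + 1) k) =
          (∏ x ∈ Finset.Icc 1 (m (j + 1 + 1)),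
              (gam n m lam (j + 1) k ^ 2 - (gam n m lam (j + 1 + 1) x + hb n m lam / 2) ^ 2)) *
          ((gam n m lam (j + 1) k + (gam n m lam j l + hb n m lam) + hb n m lam / 2) *
            ∏ x ∈ (Finset.Icc 1 (m j)).erase l,
              (gam n m lam (j + 1) k + gam n m lam j x + hb n m lam / 2)) /
          (2 * (gam n m lam (j + 1) k - hb n m lam / 2) *
            ∏ x ∈ (Finset.Icc 1 (m (j + 1))).erase k,
              (gam n m lam (j + 1) k ^ 2 - gam n m lam (j + 1) x ^ 2)) := by
        simp only [cc, Nat.add_sub_cancel, map_div₀, map_mul, map_sub, map_ofNat, hσph j l]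
        rw [hψP1, hψP2, hψE, efixp (j + 1) k hk (by omega)]
      have hcsp : cc n m lam (j + 1) k =
          (∏ x ∈ Finset.Icc 1 (m (j + 1 + 1)),
              (gam n m lam (j + 1) k ^ 2 - (gam n m lam (j + 1 + 1) x + hb n m lam / 2) ^ 2)) *
          ((gam n m lam (j + 1) k + gam n m lam j l + hb n m lam / 2) *
            ∏ x ∈ (Finset.Icc 1 (m j)).erase l,
              (gam n m lam (j + 1) k + gam n m lam j x + hb n m lam / 2)) /
          (2 * (gam n m lam (j + 1) k - hb n m lam / 2) *
            ∏ x ∈ (Finset.Icc 1 (m (j + 1))).erase k,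
              (gam n m lam (j + 1) k ^ 2 - gam n m lam (j + 1) x ^ 2)) := by
        simp only [cc, Nat.add_sub_cancel]
        rw [← Finset.mul_prod_erase _ _ hlIcc]
      rw [hφc', hψcc, hcsp,
        show cartan (j + 1) j = -1 from by simp [cartan], hfrac2, hfrac3]
      congr 1
      push_cast
      ring

    · -- |i-j| ≥ 2
      have hQR : σm i k (∏ t ∈ Finset.Icc 1 (lam j),
          ((gam n m lam j l + hb n m lam) ^ 2 - rv n m lam j t ^ 2)) =
          ∏ t ∈ Finset.Icc 1 (lam j), ((gam n m lam j l + hb n m lam) ^ 2 - rv n m lam j t ^ 2) := by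
        refine hPfix _ _ _ fun t ht => ?_
        simp only [map_sub, map_pow, map_add, hσmh i k, hσmr i k]
        rw [efixm j l hl (by omega)]
      have hQ2 : σm i k (∏ x ∈ Finset.Icc 1 (m (j - 1)),
          (gam n m lam j l + hb n m lam - gam n m lam (j - 1) x - hb n m lam / 2)) =
          ∏ x ∈ Finset.Icc 1 (m (j - 1)),
          (gam n m lam j l + hb n m lam - gam n m lam (j - 1) x - hb n m lam / 2) := by
        refine hPfix _ _ _ fun x hx => ?_
        have hx' := Finset.mem_Icc.mp hx
        simp only [map_sub, map_add, map_div₀, map_ofNat, hσmh i k]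
        rw [efixm j l hl (by omega), efixm (j - 1) x (by omega) (by omega)]
      have hF : σm i k (∏ x ∈ (Finset.Icc 1 (m j)).erase l,
          ((gam n m lam j l + hb n m lam) ^ 2 - (gam n m lam j x + hb n m lam) ^ 2)) =
          ∏ x ∈ (Finset.Icc 1 (m j)).erase l,
          ((gam n m lam j l + hb n m lam) ^ 2 - (gam n m lam j x + hb n m lam) ^ 2) := by
        refine hPfix _ _ _ fun x hx => ?_
        have hxl := (Finset.mem_erase.mp hx).1
        have hx' := Finset.mem_Icc.mp (Finset.mem_of_mem_erase hx)
        simp only [map_sub, map_pow, map_add, hσmh i k]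
        rw [efixm j l hl (by omega), efixm j x (by omega) (by omega)]
      have hφc' : σm i k (cc' n m lam j l) = cc' n m lam j l := by
        simp only [cc', RR, xi, map_div₀, map_mul, map_add, map_ofNat, hσmh i k]
        rw [hQR, hQ2, hF, efixm j l hl (by omega)]
      have hψP1 : σp j l (∏ x ∈ Finset.Icc 1 (m (i + 1)),
          (gam n m lam i k ^ 2 - (gam n m lam (i + 1) x + hb n m lam / 2) ^ 2)) =
          ∏ x ∈ Finset.Icc 1 (m (i + 1)),
          (gam n m lam i k ^ 2 - (gam n m lam (i + 1) x + hb n m lam / 2) ^ 2) := by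
        refine hPfix _ _ _ fun x hx => ?_
        have hx' := Finset.mem_Icc.mp hx
        simp only [map_sub, map_pow, map_add, map_div₀, map_ofNat, hσph j l]
        rw [efixp i k hk (by omega), efixp (i + 1) x (by omega) (by omega)]
      have hψP2 : σp j l (∏ x ∈ Finset.Icc 1 (m (i - 1)),
          (gam n m lam i k + gam n m lam (i - 1) x + hb n m lam / 2)) =
          ∏ x ∈ Finset.Icc 1 (m (i - 1)), (gam n m lam i k + gam n m lam (i - 1) x + hb n m lam / 2) := by
        refine hPfix _ _ _ fun x hx => ?_
        have hx' := Finset.mem_Icc.mp hx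
        simp only [map_add, map_div₀, map_ofNat, hσph j l]
        rw [efixp i k hk (by omega), efixp (i - 1) x (by omega) (by omega)]
      have hψE : σp j l (∏ x ∈ (Finset.Icc 1 (m i)).erase k,
          (gam n m lam i k ^ 2 - gam n m lam i x ^ 2)) =
          ∏ x ∈ (Finset.Icc 1 (m i)).erase k, (gam n m lam i k ^ 2 - gam n m lam i x ^ 2) := by
        refine hPfix _ _ _ fun x hx => ?_
        have hxl := (Finset.mem_erase.mp hx).1
        have hx' := Finset.mem_Icc.mp (Finset.mem_of_mem_erase hx)
        simp only [map_sub, map_pow, hσph j l]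
        rw [efixp i k hk (by omega), efixp i x (by omega) (by omega)]
      have hψcc : σp j l (cc n m lam i k) = cc n m lam i k := by
        simp only [cc, map_div₀, map_mul, map_sub, map_ofNat, hσph j l]
        rw [hψP1, hψP2, hψE, efixp i k hk (by omega)]
      rw [hφc', hψcc,
        show cartan i j = 0 from by
          simp only [cartan]; rw [if_neg (by omega), if_neg (by omega)]]
      push_cast
      ring
  -- conclusion
  apply LinearMap.ext
  intro x
  simp only [Mop, kap, kap', Module.End.mul_apply, LinearMap.mulLeft_apply,
    AlgEquiv.toLinearMap_apply]
  rw [map_mul, map_mul, hcomm x]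
  linear_combination σp j l (σm i k x) * HS
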